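/- With the section setup, assume additionally that there are pairwise disjoint measurable sets (U_g)_{g∈G} in M such that (s_g)_*σ̃(M \ U_g) = 0 for every g ∈ G. Let π̃ be a probability measure on N × N whose first and second marginals both equal σ̃, and define π = (1/|G|²) Σ_{(g,h)∈G×G} (s_g × s_h)_*π̃. Then the relative entropies coincide: H(π | σ ⊗ σ) = H(π̃ | σ̃ ⊗ σ̃). -/

import Mathlib

open MeasureTheory ENNReal

lemma aux_map_finsum {α β ι : Type*} [MeasurableSpace α] [MeasurableSpace β] [Fintype ι]
    (μ : ι → Measure α) {f : α → β} (hf : Measurable f) :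
    (∑ i, μ i).map f = ∑ i, (μ i).map f := by
  rw [← Measure.sum_fintype, Measure.map_sum hf.aemeasurable, Measure.sum_fintype]

lemma aux_withDensity_finsum {α ι : Type*} [MeasurableSpace α] [Fintype ι]
    (μ : ι → Measure α) (f : α → ℝ≥0∞) :
    (∑ i, μ i).withDensity f = ∑ i, (μ i).withDensity f := by
  rw [← Measure.sum_fintype, withDensity_sum, Measure.sum_fintype]

lemma aux_smul_prod {α β : Type*} [MeasurableSpace α] [MeasurableSpace β]
    (c : ℝ≥0∞) (μ : Measure α) (ν : Measure β) [SFinite ν] :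
    (c • μ).prod ν = c • (μ.prod ν) := by
  ext s hs
  rw [Measure.prod_apply hs, Measure.smul_apply, smul_eq_mul, Measure.prod_apply hs,
    lintegral_smul_measure, smul_eq_mul]

lemma aux_prod_smul {α β : Type*} [MeasurableSpace α] [MeasurableSpace β]
    (c : ℝ≥0∞) (μ : Measure α) (ν : Measure β) [SFinite ν] :
    μ.prod (c • ν) = c • (μ.prod ν) := by
  ext s hs
  rw [Measure.prod_apply hs, Measure.smul_apply, smul_eq_mul, Measure.prod_apply hs,
    ← lintegral_const_mul c (measurable_measure_prodMk_left hs)]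
  simp

lemma aux_finsum_prod {α β ι : Type*} [MeasurableSpace α] [MeasurableSpace β] [Fintype ι]
    (μ : ι → Measure α) (ν : Measure β) [SFinite ν] :
    (∑ i, μ i).prod ν = ∑ i, (μ i).prod ν := by
  rw [← Measure.sum_fintype, Measure.prod_sum_left, Measure.sum_fintype]

lemma aux_prod_finsum {α β ι : Type*} [MeasurableSpace α] [MeasurableSpace β] [Fintype ι]
    (μ : Measure α) (ν : ι → Measure β) [∀ i, SFinite (ν i)] :
    μ.prod (∑ i, ν i) = ∑ i, μ.prod (ν i) := by
  rw [← Measure.sum_fintype, Measure.prod_sum_right, Measure.sum_fintype]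

lemma aux_map_withDensity {α β : Type*} [MeasurableSpace α] [MeasurableSpace β]
    {T : α → β} (hT : Measurable T) {g : β → ℝ≥0∞} (hg : Measurable g) (μ : Measure α) :
    (μ.withDensity (g ∘ T)).map T = (μ.map T).withDensity g := by
  ext s hs
  rw [Measure.map_apply hT hs, withDensity_apply _ (hT hs), withDensity_apply _ hs,
    setLIntegral_map hs hg hT]
  rfl

open Classical in
/-- Relative entropy (Kullback–Leibler divergence): `H(μ|ν) = ∫ log (dμ/dν) dμ` when
`μ ≪ ν` (and the integral is well defined), and `+∞` otherwise. -/
noncomputable def relEntropy {E : Type*} [MeasurableSpace E] (μ ν : Measure E) : EReal :=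
  if μ ≪ ν ∧ Integrable (llr μ ν) μ then ((∫ x, llr μ ν x ∂μ : ℝ) : EReal) else ⊤

/-- With measurable sections `s g` of `q` carrying `σ̃` to measures supported on pairwise
disjoint sets `U g`, `σ = (1/|G|) Σ_g (s_g)_*σ̃` and
`π = (1/|G|²) Σ_{g,h} (s_g × s_h)_*π̃` (both marginals of `π̃` equal to `σ̃`), the
relative entropies coincide: `H(π | σ ⊗ σ) = H(π̃ | σ̃ ⊗ σ̃)`. -/
theorem relEntropy_averaged_sections_eq {M N : Type*} [MeasurableSpace M] [MeasurableSpace N]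
    [StandardBorelSpace M] [StandardBorelSpace N]
    {G : Type*} [Fintype G] [Nonempty G]
    (q : M → N) (hq : Measurable q)
    (s : G → N → M) (hs : ∀ g, Measurable (s g)) (hqs : ∀ g, q ∘ s g = id)
    (σtilde : Measure N) [IsProbabilityMeasure σtilde]
    (σ : Measure M)
    (hσ : σ = (Fintype.card G : ℝ≥0∞)⁻¹ • ∑ g : G, σtilde.map (s g))
    (U : G → Set M) (hU : ∀ g, MeasurableSet (U g))
    (hUdisj : ∀ g h : G, g ≠ h → Disjoint (U g) (U h))
    (hUnull : ∀ g, (σtilde.map (s g)) (U g)ᶜ = 0)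
    (πtilde : Measure (N × N)) [IsProbabilityMeasure πtilde]
    (h1 : πtilde.map Prod.fst = σtilde) (h2 : πtilde.map Prod.snd = σtilde)
    (π : Measure (M × M))
    (hπ : π = ((Fintype.card G : ℝ≥0∞) ^ 2)⁻¹ •
      ∑ g : G, ∑ h : G, πtilde.map (Prod.map (s g) (s h))) :
    relEntropy π (σ.prod σ) = relEntropy πtilde (σtilde.prod σtilde) := by
  set c : ℝ≥0∞ := (Fintype.card G : ℝ≥0∞) with hc
  have hc0 : c ≠ 0 := by
    simp [hc, Fintype.card_ne_zero]
  have hcT : c ≠ ⊤ := by simp [hc]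
  have hc20 : c ^ 2 ≠ 0 := pow_ne_zero _ hc0
  have hc2T : c ^ 2 ≠ ⊤ := by
    simp [pow_two, ENNReal.mul_ne_top hcT hcT]
  haveI hprob : ∀ g : G, IsProbabilityMeasure (σtilde.map (s g)) :=
    fun g => Measure.isProbabilityMeasure_map (hs g).aemeasurable
  set Q : M × M → N × N := Prod.map q q with hQdef
  have hQ : Measurable Q := hq.prodMap hq
  set T : G → G → (N × N → M × M) := fun g h => Prod.map (s g) (s h) with hTdef
  have hT : ∀ g h, Measurable (T g h) := fun g h => (hs g).prodMap (hs h)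
  have hQT : ∀ g h, Q ∘ T g h = id := by
    intro g h
    funext x
    simp only [hQdef, hTdef, Function.comp_apply, Prod.map_apply, id_eq]
    exact Prod.ext (congrFun (hqs g) x.1) (congrFun (hqs h) x.2)
  -- instances
  haveI hprobT : ∀ g h : G, IsProbabilityMeasure (πtilde.map (T g h)) :=
    fun g h => Measure.isProbabilityMeasure_map (hT g h).aemeasurable
  haveI : IsProbabilityMeasure σ := by
    constructor
    rw [hσ]
    rw [Measure.smul_apply, Measure.finset_sum_apply]
    simp only [measure_univ, Finset.sum_const, Finset.card_univ, nsmul_eq_mul, mul_one,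
      smul_eq_mul]
    exact ENNReal.inv_mul_cancel hc0 hcT
  haveI : IsProbabilityMeasure π := by
    constructor
    rw [hπ]
    rw [Measure.smul_apply, Measure.finset_sum_apply]
    simp only [Measure.finset_sum_apply, measure_univ, Finset.sum_const, Finset.card_univ,
      nsmul_eq_mul, mul_one, smul_eq_mul]
    rw [← hc, ← sq]
    exact ENNReal.inv_mul_cancel hc20 hc2T
  -- pushforward identities
  have hmapσ : σ.map q = σtilde := by
    rw [hσ, Measure.map_smul, aux_map_finsum _ hq]
    have : ∀ g : G, (σtilde.map (s g)).map q = σtilde := by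
      intro g
      rw [Measure.map_map hq (hs g), hqs g, Measure.map_id]
    simp only [this, Finset.sum_const, Finset.card_univ, ← Nat.cast_smul_eq_nsmul ℝ≥0∞,
      smul_smul, ← hc]
    rw [ENNReal.inv_mul_cancel hc0 hcT, one_smul]
  have hmapπ : π.map Q = πtilde := by
    rw [hπ, Measure.map_smul, aux_map_finsum _ hQ]
    have : ∀ g h : G, (πtilde.map (T g h)).map Q = πtilde := by
      intro g h
      rw [Measure.map_map hQ (hT g h), hQT g h, Measure.map_id]
    simp only [hTdef] at this
    simp only [aux_map_finsum _ hQ, this, Finset.sum_const, Finset.card_univ,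
      ← Nat.cast_smul_eq_nsmul ℝ≥0∞, smul_smul, ← hc]
    rw [← pow_two, ENNReal.inv_mul_cancel hc20 hc2T, one_smul]
  -- product measure decomposition
  haveI hSsf : ∀ g : G, SFinite (σtilde.map (s g)) := fun g => inferInstance
  haveI hSfin : IsFiniteMeasure (∑ g : G, σtilde.map (s g)) := by
    constructor
    rw [Measure.finset_sum_apply]
    simp
  haveI : SFinite ((Fintype.card G : ℝ≥0∞)⁻¹ • ∑ g : G, σtilde.map (s g)) := by
    rw [← hσ]; infer_instance
  have hprodσ : σ.prod σ = (c ^ 2)⁻¹ • ∑ g : G, ∑ h : G, (σtilde.prod σtilde).map (T g h) := by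
    have hterm : ∀ g h : G, (σtilde.map (s g)).prod (σtilde.map (s h))
        = (σtilde.prod σtilde).map (T g h) := fun g h =>
      Measure.map_prod_map _ _ (hs g) (hs h)
    rw [hσ, aux_smul_prod, aux_prod_smul, aux_finsum_prod]
    simp_rw [aux_prod_finsum, hterm]
    rw [smul_smul, ← ENNReal.mul_inv (Or.inl hc0) (Or.inl hcT), ← sq]
  have hQprodσ : (σ.prod σ).map Q = σtilde.prod σtilde := by
    rw [hQdef, ← Measure.map_prod_map _ _ hq hq, hmapσ]
  set ρ : Measure (N × N) := σtilde.prod σtilde with hρdef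
  set rn : N × N → ℝ≥0∞ := πtilde.rnDeriv ρ with hrndef
  have hrnm : Measurable rn := Measure.measurable_rnDeriv _ _
  have hdir : πtilde ≪ ρ → π = (σ.prod σ).withDensity (rn ∘ Q) := by
    intro hac
    have hwd : ρ.withDensity rn = πtilde := Measure.withDensity_rnDeriv_eq _ _ hac
    have hterm : ∀ g h : G, πtilde.map (T g h)
        = ((σtilde.prod σtilde).map (T g h)).withDensity (rn ∘ Q) := by
      intro g h
      have hcomp : (rn ∘ Q) ∘ T g h = rn := by
        funext x
        exact congrArg rn (congrFun (hQT g h) x)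
      calc πtilde.map (T g h)
          = (ρ.withDensity ((rn ∘ Q) ∘ T g h)).map (T g h) := by rw [hcomp, hwd]
        _ = (ρ.map (T g h)).withDensity (rn ∘ Q) :=
            aux_map_withDensity (hT g h) (hrnm.comp hQ) ρ
    rw [hπ, hprodσ, withDensity_smul_measure, aux_withDensity_finsum]
    congr 1
    refine Finset.sum_congr rfl fun g _ => ?_
    rw [aux_withDensity_finsum]
    exact Finset.sum_congr rfl fun h _ => hterm g h
  have hacEquiv : π ≪ σ.prod σ ↔ πtilde ≪ ρ := by
    constructor
    · intro h
      have := h.map hQ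
      rwa [hmapπ, hQprodσ] at this
    · intro h
      rw [hdir h]
      exact withDensity_absolutelyContinuous _ _
  by_cases hac : πtilde ≪ ρ
  · have hπeq := hdir hac
    have hπac : π ≪ σ.prod σ := hacEquiv.mpr hac
    have hrnπ : π.rnDeriv (σ.prod σ) =ᵐ[σ.prod σ] rn ∘ Q := by
      have := Measure.rnDeriv_withDensity (σ.prod σ) (hrnm.comp hQ)
      rw [← hπeq] at this
      exact this
    have hrnπ' : π.rnDeriv (σ.prod σ) =ᵐ[π] rn ∘ Q := hπac.ae_le hrnπ
    have hllr : llr π (σ.prod σ) =ᵐ[π] (llr πtilde ρ) ∘ Q := by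
      filter_upwards [hrnπ'] with x hx
      simp only [llr, Function.comp_apply, hx, hrndef]
    have h2' := integrable_map_measure (μ := π) (f := Q) (g := llr πtilde ρ)
      ((measurable_llr πtilde ρ).aestronglyMeasurable) hQ.aemeasurable
    rw [hmapπ] at h2'
    have hint : Integrable (llr π (σ.prod σ)) π ↔ Integrable (llr πtilde ρ) πtilde :=
      (integrable_congr hllr).trans h2'.symm
    have hInt : ∫ x, llr π (σ.prod σ) x ∂π = ∫ y, llr πtilde ρ y ∂πtilde := by
      rw [integral_congr_ae hllr]
      simp only [Function.comp_apply]
      rw [← integral_map hQ.aemeasurable ((measurable_llr _ _).aestronglyMeasurable), hmapπ]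
    simp only [relEntropy]
    by_cases hi : Integrable (llr πtilde ρ) πtilde
    · rw [if_pos ⟨hπac, hint.mpr hi⟩, if_pos ⟨hac, hi⟩, hInt]
    · rw [if_neg (fun h => hi (hint.mp h.2)), if_neg (fun h => hi h.2)]
  · have hnac : ¬ π ≪ σ.prod σ := fun h => hac (hacEquiv.mp h)
    simp only [relEntropy]
    rw [if_neg (fun h => hnac h.1), if_neg (fun h => hac h.1)]
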